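/- The quadratic shift-of-argument elements commute: for a regular diagonal matrix Z = diag(z_1,…,z_M) with distinct entries, the elements q_h = Σ_{1 ≤ i < j ≤ M} (h_i − h_j)/(z_i − z_j) · e_{ij} e_{ji} ∈ U(gl_M), indexed by diagonal matrices h = diag(h_1,…,h_M), pairwise commute: q_h q_{h'} = q_{h'} q_h for all diagonal h, h'. -/

import Mathlib

attribute [local instance 100] LieRing.ofAssociativeRing

open Matrix Finset

section ShiftOfArgumentAux

variable {M : ℕ}

noncomputable abbrev Egen (i j : Fin M) :
    UniversalEnvelopingAlgebra ℂ (Matrix (Fin M) (Fin M) ℂ) :=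
  UniversalEnvelopingAlgebra.ι ℂ (Matrix.single i j (1:ℂ))

noncomputable def Xg (i j k : Fin M) :
    UniversalEnvelopingAlgebra ℂ (Matrix (Fin M) (Fin M) ℂ) :=
  Egen i j * Egen j k * Egen k i - Egen i k * Egen k j * Egen j i

noncomputable def cc (z h : Fin M → ℂ) (a b : Fin M) : ℂ := (h a - h b) / (z a - z b)

noncomputable def dd (z h h' : Fin M → ℂ) (a b c : Fin M) : ℂ :=
  cc z h a b * (cc z h' a c - cc z h' b c) - cc z h' a b * (cc z h a c - cc z h b c)

open Classical in
lemma Egen_comm {M : ℕ} (i j k l : Fin M) :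
    Egen i j * Egen k l - Egen k l * Egen i j
      = (if j = k then Egen i l else 0) - (if l = i then Egen k j else 0) := by
  have h := (UniversalEnvelopingAlgebra.ι ℂ (L := Matrix (Fin M) (Fin M) ℂ)).map_lie
    (Matrix.single i j (1:ℂ)) (Matrix.single k l (1:ℂ))
  rw [Ring.lie_def, Ring.lie_def] at h
  rw [← h, map_sub]
  congr 1
  · by_cases hjk : j = k
    · subst hjk; rw [Matrix.single_mul_single_same, if_pos rfl, one_mul]
    · rw [Matrix.single_mul_single_of_ne 1 i j k hjk 1, if_neg hjk, map_zero]
  · by_cases hli : l = i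
    · subst hli; rw [Matrix.single_mul_single_same, if_pos rfl, one_mul]
    · rw [Matrix.single_mul_single_of_ne 1 k l i hli 1, if_neg hli, map_zero]

lemma Ecomm_zero {M : ℕ} {i j k l : Fin M} (h1 : j ≠ k) (h2 : l ≠ i) :
    Egen i j * Egen k l - Egen k l * Egen i j = 0 := by
  classical
  rw [Egen_comm, if_neg h1, if_neg h2, sub_zero]

lemma Ecomm_mid {M : ℕ} {i j l : Fin M} (h2 : l ≠ i) :
    Egen i j * Egen j l - Egen j l * Egen i j = Egen i l := by
  classical
  rw [Egen_comm, if_pos rfl, if_neg h2, sub_zero]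

lemma Ecomm_out {M : ℕ} {i j k : Fin M} (h1 : j ≠ k) :
    Egen i j * Egen k i - Egen k i * Egen i j = -Egen k j := by
  classical
  rw [Egen_comm, if_neg h1, if_pos rfl, zero_sub]

open Classical in
lemma Egen_diag {M : ℕ} (m i j : Fin M) :
    Egen m m * Egen i j - Egen i j * Egen m m
      = ((if m = i then (1:ℂ) else 0) - (if m = j then 1 else 0)) • Egen i j := by
  rw [Egen_comm m m i j]
  by_cases h1 : m = i <;> by_cases h2 : m = j
  · subst h1; subst h2; simp
  · subst h1; rw [if_pos rfl, if_pos rfl, if_neg (fun h => h2 h.symm), if_neg h2]; simp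
  · subst h2; rw [if_neg h1, if_pos rfl, if_pos rfl, if_neg h1]; simp
  · rw [if_neg h1, if_neg (fun h => h2 h.symm), if_neg h1, if_neg h2]; simp

lemma diag_comm {M : ℕ} (m i j : Fin M) :
    Egen m m * (Egen i j * Egen j i) = (Egen i j * Egen j i) * Egen m m := by
  classical
  set t : ℂ := (if m = i then (1:ℂ) else 0) - (if m = j then 1 else 0) with ht
  have c1 : Egen m m * Egen i j - Egen i j * Egen m m = t • Egen i j := Egen_diag m i j
  have c2 : Egen m m * Egen j i - Egen j i * Egen m m = (-t) • Egen j i := by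
    rw [Egen_diag m j i, ht]; ring_nf
  have key2 : Egen m m * (Egen i j * Egen j i) - (Egen i j * Egen j i) * Egen m m = 0 := by
    have key : Egen m m * (Egen i j * Egen j i) - (Egen i j * Egen j i) * Egen m m
        = (Egen m m * Egen i j - Egen i j * Egen m m) * Egen j i
          + Egen i j * (Egen m m * Egen j i - Egen j i * Egen m m) := by
      noncomm_ring
    rw [key, c1, c2, smul_mul_assoc, mul_smul_comm, neg_smul]
    exact add_neg_cancel _
  linear_combination (norm := noncomm_ring) key2

lemma B1 {M : ℕ} {i j k : Fin M} (hij : i ≠ j) (hik : i ≠ k) (hjk : j ≠ k) :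
    (Egen i j * Egen j i) * (Egen i k * Egen k i) - (Egen i k * Egen k i) * (Egen i j * Egen j i)
      = Xg i j k := by
  have hbc := Ecomm_mid (i := j) (j := i) (l := k) hjk.symm
  have hbd := Ecomm_zero (i := j) (j := i) (k := k) (l := i) hik hij
  have hac := Ecomm_zero (i := i) (j := j) (k := i) (l := k) hij.symm hik.symm
  have had := Ecomm_out (i := i) (j := j) (k := k) hjk
  simp only [Xg]
  linear_combination (norm := noncomm_ring)
    Egen i j * hbc * Egen k i + (Egen i j * Egen i k) * hbd + hac * (Egen k i * Egen j i)
      + Egen i k * had * Egen j i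

lemma B2 {M : ℕ} {i j k : Fin M} (hij : i ≠ j) (hik : i ≠ k) (hjk : j ≠ k) :
    (Egen i j * Egen j i) * (Egen j k * Egen k j) - (Egen j k * Egen k j) * (Egen i j * Egen j i)
      = -Xg i j k := by
  have hbc := Ecomm_zero (i := j) (j := i) (k := j) (l := k) hij (Ne.symm hjk)
  have hbd := Ecomm_out (i := j) (j := i) (k := k) hik
  have hac := Ecomm_mid (i := i) (j := j) (l := k) hik.symm
  have had := Ecomm_zero (i := i) (j := j) (k := k) (l := j) hjk hij.symm
  simp only [Xg]
  linear_combination (norm := noncomm_ring)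
    Egen i j * hbc * Egen k j + (Egen i j * Egen j k) * hbd + hac * (Egen k j * Egen j i)
      + Egen j k * had * Egen j i

lemma Bdisj {M : ℕ} {i j k l : Fin M} (hik : i ≠ k) (hil : i ≠ l) (hjk : j ≠ k) (hjl : j ≠ l) :
    (Egen i j * Egen j i) * (Egen k l * Egen l k) - (Egen k l * Egen l k) * (Egen i j * Egen j i)
      = 0 := by
  have hbc := Ecomm_zero (i := j) (j := i) (k := k) (l := l) hik (Ne.symm hjl)
  have hbd := Ecomm_zero (i := j) (j := i) (k := l) (l := k) hil (Ne.symm hjk)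
  have hac := Ecomm_zero (i := i) (j := j) (k := k) (l := l) hjk (Ne.symm hil)
  have had := Ecomm_zero (i := i) (j := j) (k := l) (l := k) hjl (Ne.symm hik)
  linear_combination (norm := noncomm_ring)
    Egen i j * hbc * Egen l k + (Egen i j * Egen k l) * hbd + hac * (Egen l k * Egen j i)
      + Egen k l * had * Egen j i

lemma Bki {i j k : Fin M} (hij : i ≠ j) (hik : i ≠ k) (hjk : j ≠ k) :
    (Egen i j * Egen j i) * (Egen k i * Egen i k) - (Egen k i * Egen i k) * (Egen i j * Egen j i)
      = Xg i j k := by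
  have hs : Egen k i * Egen i k - Egen i k * Egen k i = Egen k k - Egen i i := by
    rw [Egen_comm k i i k, if_pos rfl, if_pos rfl]
  have b1 := B1 hij hik hjk
  have d1 := diag_comm k i j
  have d2 := diag_comm i i j
  linear_combination (norm := noncomm_ring)
    b1 + (Egen i j * Egen j i) * hs - hs * (Egen i j * Egen j i) - d1 + d2

lemma Bkj {i j k : Fin M} (hij : i ≠ j) (hik : i ≠ k) (hjk : j ≠ k) :
    (Egen i j * Egen j i) * (Egen k j * Egen j k) - (Egen k j * Egen j k) * (Egen i j * Egen j i)
      = -Xg i j k := by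
  have hs : Egen k j * Egen j k - Egen j k * Egen k j = Egen k k - Egen j j := by
    rw [Egen_comm k j j k, if_pos rfl, if_pos rfl]
  have b2 := B2 hij hik hjk
  have d1 := diag_comm k i j
  have d2 := diag_comm j i j
  linear_combination (norm := noncomm_ring)
    b2 + (Egen i j * Egen j i) * hs - hs * (Egen i j * Egen j i) - d1 + d2

lemma Xg_abb (i j : Fin M) : Xg i j j = 0 := by simp [Xg]

lemma Xg_aab (i k : Fin M) : Xg i i k = 0 := by
  have := diag_comm i i k
  simp only [Xg]
  linear_combination (norm := noncomm_ring) this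

lemma Xg_aba (i j : Fin M) : Xg i j i = 0 := by
  have := diag_comm i i j
  simp only [Xg]
  linear_combination (norm := noncomm_ring) -this

lemma Xg_swap23 (i j k : Fin M) : Xg i k j = -Xg i j k := by
  simp only [Xg]; abel

lemma Xg_swap12 (i j k : Fin M) : Xg j i k = -Xg i j k := by
  by_cases hij : i = j
  · subst hij; rw [Xg_aab]; simp [Xg_aab]
  by_cases hik : i = k
  · subst hik; rw [Xg_abb, Xg_aba]; simp
  by_cases hjk : j = k
  · subst hjk; rw [Xg_aba, Xg_abb]; simp
  · have hmc1 := Ecomm_mid (i := j) (j := i) (l := k) (fun h => hjk h.symm)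
    have hmc2 := Ecomm_out (i := j) (j := i) (k := k) hik
    have hmc3 := Ecomm_mid (i := k) (j := i) (l := j) hjk
    have hmc4 := Ecomm_mid (i := i) (j := j) (l := k) (fun h => hik h.symm)
    simp only [Xg]
    linear_combination (norm := noncomm_ring)
      hmc1 * Egen k j + Egen i k * hmc2 - Egen j k * hmc3 + hmc4 * Egen k i

lemma Xg_cyc (i j k : Fin M) : Xg j k i = Xg i j k := by
  rw [Xg_swap23 j i k, Xg_swap12 i j k, neg_neg]

lemma cc_self (z h : Fin M → ℂ) (a : Fin M) : cc z h a a = 0 := by simp [cc]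

lemma cc_symm (z h : Fin M → ℂ) (a b : Fin M) : cc z h a b = cc z h b a := by
  rw [cc, cc, ← neg_div_neg_eq, neg_sub, neg_sub]

lemma dd_swap (z h h' : Fin M → ℂ) (a b c : Fin M) :
    dd z h h' b a c = - dd z h h' a b c := by
  rw [dd, dd, cc_symm z h b a, cc_symm z h' b a]; ring

lemma dd_self (z h h' : Fin M → ℂ) (a c : Fin M) : dd z h h' a a c = 0 := by
  simp [dd, cc_self]

lemma dd_cyc {z : Fin M → ℂ} (hz : Function.Injective z) (h h' : Fin M → ℂ) (i j m : Fin M) :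
    dd z h h' i j m + dd z h h' j m i + dd z h h' m i j = 0 := by
  by_cases hij : i = j
  · subst hij
    rw [dd_self]
    simp only [dd, cc_self, zero_mul, sub_zero, zero_sub, mul_neg, mul_zero]
    rw [cc_symm z h i m, cc_symm z h' i m]
    ring
  · by_cases him : i = m
    · subst him
      simp only [dd, cc_self, zero_mul, sub_zero, zero_sub, mul_neg, mul_zero]
      rw [cc_symm z h i j, cc_symm z h' i j]
      ring
    · by_cases hjm : j = m
      · subst hjm
        simp only [dd, cc_self, zero_mul, sub_zero, zero_sub, mul_neg, mul_zero]
        rw [cc_symm z h i j, cc_symm z h' i j]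
        ring
      · have e1 : z i - z j ≠ 0 := sub_ne_zero.mpr (fun e => hij (hz e))
        have e2 : z i - z m ≠ 0 := sub_ne_zero.mpr (fun e => him (hz e))
        have e3 : z j - z m ≠ 0 := sub_ne_zero.mpr (fun e => hjm (hz e))
        have e4 : z j - z i ≠ 0 := sub_ne_zero.mpr (fun e => hij (hz e).symm)
        have e5 : z m - z i ≠ 0 := sub_ne_zero.mpr (fun e => him (hz e).symm)
        have e6 : z m - z j ≠ 0 := sub_ne_zero.mpr (fun e => hjm (hz e).symm)
        simp only [dd, cc]
        field_simp
        ring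

open Classical in
lemma Kkappa {i j k l : Fin M} (hij : i < j) (hkl : k < l) :
    (Egen i j * Egen j i) * (Egen k l * Egen l k) - (Egen k l * Egen l k) * (Egen i j * Egen j i)
      = ((if k = i then (1:ℂ) else 0) - (if k = j then 1 else 0)) • Xg i j l
        + ((if l = i then (1:ℂ) else 0) - (if l = j then 1 else 0)) • Xg i j k := by
  by_cases hki : k = i
  · subst hki
    by_cases hlj : l = j
    · subst hlj
      simp [hij.ne, hij.ne', Xg_abb, Xg_aba]
    · simpa [hij.ne, hkl.ne', hlj] using B1 hij.ne hkl.ne (Ne.symm hlj)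
  · by_cases hkj : k = j
    · subst hkj
      simpa [hij.ne', hkl.ne', (hij.trans hkl).ne'] using
        B2 hij.ne (hij.trans hkl).ne hkl.ne
    · by_cases hli : l = i
      · subst hli
        simpa [hki, (hkl.trans hij).ne, hij.ne] using
          Bki hij.ne hkl.ne' (hkl.trans hij).ne'
      · by_cases hlj : l = j
        · subst hlj
          simpa [hki, hkl.ne, hij.ne'] using Bkj hij.ne (Ne.symm hki) hkl.ne'
        · simpa [hki, hkj, hli, hlj] using
            Bdisj (Ne.symm hki) (Ne.symm hli) (Ne.symm hkj) (Ne.symm hlj)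

lemma sum_pairs {A : Type*} [AddCommMonoid A] (F : Fin M × Fin M → A)
    (hdiag : ∀ k : Fin M, F (k, k) = 0) :
    ∑ p ∈ Finset.univ.filter (fun p : Fin M × Fin M => p.1 < p.2), (F p + F p.swap)
      = ∑ p : Fin M × Fin M, F p := by
  classical
  have h1 : ∑ p : Fin M × Fin M, F p
      = ∑ p ∈ Finset.univ.filter (fun p : Fin M × Fin M => p.1 < p.2), F p
        + ∑ p ∈ Finset.univ.filter (fun p : Fin M × Fin M => ¬ p.1 < p.2), F p :=
    (Finset.sum_filter_add_sum_filter_not _ _ _).symm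
  have h2 : ∑ p ∈ Finset.univ.filter (fun p : Fin M × Fin M => ¬ p.1 < p.2), F p
      = ∑ p ∈ Finset.univ.filter (fun p : Fin M × Fin M => p.2 < p.1), F p := by
    refine (Finset.sum_subset ?_ ?_).symm
    · intro p hp
      simp only [Finset.mem_filter, Finset.mem_univ, true_and] at hp ⊢
      exact not_lt_of_gt hp
    · intro p hp hp2
      simp only [Finset.mem_filter, Finset.mem_univ, true_and, not_lt] at hp hp2
      have h12 : p.1 = p.2 := le_antisymm hp2 hp
      have hpp : p = (p.1, p.1) := Prod.ext rfl h12.symm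
      rw [hpp, hdiag]
  have h3 : ∑ p ∈ Finset.univ.filter (fun p : Fin M × Fin M => p.2 < p.1), F p
      = ∑ p ∈ Finset.univ.filter (fun p : Fin M × Fin M => p.1 < p.2), F p.swap := by
    refine Finset.sum_nbij' (fun p => p.swap) (fun p => p.swap) ?_ ?_ ?_ ?_ ?_ <;>
      simp [Prod.swap]
  rw [h1, h2, h3, ← Finset.sum_add_distrib]

open Classical in
lemma SInner (z h' : Fin M → ℂ) {i j : Fin M} (hij : i < j) :
    ∑ p' ∈ Finset.univ.filter (fun p : Fin M × Fin M => p.1 < p.2),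
      cc z h' p'.1 p'.2 • ((Egen i j * Egen j i) * (Egen p'.1 p'.2 * Egen p'.2 p'.1)
        - (Egen p'.1 p'.2 * Egen p'.2 p'.1) * (Egen i j * Egen j i))
      = ∑ m : Fin M, (cc z h' i m - cc z h' j m) • Xg i j m := by
  classical
  set G : Fin M × Fin M → UniversalEnvelopingAlgebra ℂ (Matrix (Fin M) (Fin M) ℂ) :=
    fun r => (((if r.1 = i then (1:ℂ) else 0) - (if r.1 = j then 1 else 0))
      * cc z h' r.1 r.2) • Xg i j r.2 with hG
  have step1 : ∑ p' ∈ Finset.univ.filter (fun p : Fin M × Fin M => p.1 < p.2),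
      cc z h' p'.1 p'.2 • ((Egen i j * Egen j i) * (Egen p'.1 p'.2 * Egen p'.2 p'.1)
        - (Egen p'.1 p'.2 * Egen p'.2 p'.1) * (Egen i j * Egen j i))
      = ∑ p' ∈ Finset.univ.filter (fun p : Fin M × Fin M => p.1 < p.2), (G p' + G p'.swap) := by
    refine Finset.sum_congr rfl (fun p' hp' => ?_)
    have hp : p'.1 < p'.2 := (Finset.mem_filter.mp hp').2
    rw [Kkappa hij hp, hG]
    simp only [smul_add, smul_smul, Prod.fst_swap, Prod.snd_swap]
    rw [cc_symm z h' p'.2 p'.1]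
    rw [mul_comm (cc z h' p'.1 p'.2) _, mul_comm (cc z h' p'.1 p'.2) _]
  rw [step1, sum_pairs G (fun k => by simp [hG, cc_self]), Fintype.sum_prod_type]
  have step2 : ∀ k : Fin M, ∑ l : Fin M, G (k, l)
      = ((if k = i then (1:ℂ) else 0) - (if k = j then 1 else 0))
          • ∑ l : Fin M, cc z h' k l • Xg i j l := by
    intro k
    rw [Finset.smul_sum]
    exact Finset.sum_congr rfl (fun l _ => by rw [hG]; simp [mul_smul])
  simp only [step2]
  set g : Fin M → UniversalEnvelopingAlgebra ℂ (Matrix (Fin M) (Fin M) ℂ) :=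
    fun k => ∑ l : Fin M, cc z h' k l • Xg i j l with hg
  have step3 : ∑ k : Fin M, ((if k = i then (1:ℂ) else 0) - (if k = j then 1 else 0)) • g k
      = g i - g j := by
    simp only [sub_smul, ite_smul, one_smul, zero_smul]
    rw [Finset.sum_sub_distrib]
    rw [Finset.sum_ite_eq' Finset.univ i g, Finset.sum_ite_eq' Finset.univ j g]
    simp
  rw [step3, hg]
  rw [← Finset.sum_sub_distrib]
  exact Finset.sum_congr rfl (fun m _ => by rw [sub_smul])

lemma sum_cyc {A : Type*} [AddCommMonoid A] (f : Fin M → Fin M → Fin M → A) :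
    ∑ a : Fin M, ∑ b : Fin M, ∑ c : Fin M, f b c a
      = ∑ a : Fin M, ∑ b : Fin M, ∑ c : Fin M, f a b c := by
  rw [Finset.sum_comm]
  exact Finset.sum_congr rfl fun b _ => Finset.sum_comm

end ShiftOfArgumentAux

open Classical in
/-- the quadratic shift-of-argument elements
`q_h = Σ_{i<j} ((h_i - h_j)/(z_i - z_j)) e_{ij} e_{ji} ∈ U(gl_M)`, indexed by diagonal matrices
`h = diag(h_1,…,h_M)`, pairwise commute (for a regular diagonal `Z = diag(z_1,…,z_M)` with
pairwise distinct entries). -/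
theorem shift_of_argument_quadratic_commute
    (M : ℕ) (z : Fin M → ℂ) (hz : Function.Injective z)
    (q : (Fin M → ℂ) → UniversalEnvelopingAlgebra ℂ (Matrix (Fin M) (Fin M) ℂ))
    (hq : ∀ h : Fin M → ℂ, q h = ∑ p ∈ Finset.univ.filter
        (fun p : Fin M × Fin M => p.1 < p.2),
      ((h p.1 - h p.2) / (z p.1 - z p.2)) •
        (UniversalEnvelopingAlgebra.ι ℂ (Matrix.single p.1 p.2 (1 : ℂ)) *
         UniversalEnvelopingAlgebra.ι ℂ (Matrix.single p.2 p.1 (1 : ℂ)))) :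
    ∀ h h' : Fin M → ℂ, q h * q h' = q h' * q h := by
  classical
  intro h h'
  -- Step 1: the commutator as a double sum
  have key : ∀ f g : Fin M → ℂ, q f * q g - q g * q f
      = ∑ p ∈ Finset.univ.filter (fun p : Fin M × Fin M => p.1 < p.2),
          cc z f p.1 p.2 • ∑ m : Fin M, (cc z g p.1 m - cc z g p.2 m) • Xg p.1 p.2 m := by
    intro f g
    have ef : q f = ∑ p ∈ Finset.univ.filter (fun p : Fin M × Fin M => p.1 < p.2),
        cc z f p.1 p.2 • (Egen p.1 p.2 * Egen p.2 p.1) := hq f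
    have eg : q g = ∑ p ∈ Finset.univ.filter (fun p : Fin M × Fin M => p.1 < p.2),
        cc z g p.1 p.2 • (Egen p.1 p.2 * Egen p.2 p.1) := hq g
    rw [ef, eg, Finset.sum_mul_sum, Finset.sum_mul_sum]
    rw [show (∑ p ∈ Finset.univ.filter (fun p : Fin M × Fin M => p.1 < p.2),
        ∑ p' ∈ Finset.univ.filter (fun p : Fin M × Fin M => p.1 < p.2),
          cc z g p.1 p.2 • (Egen p.1 p.2 * Egen p.2 p.1) *
            (cc z f p'.1 p'.2 • (Egen p'.1 p'.2 * Egen p'.2 p'.1)))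
      = ∑ p ∈ Finset.univ.filter (fun p : Fin M × Fin M => p.1 < p.2),
        ∑ p' ∈ Finset.univ.filter (fun p : Fin M × Fin M => p.1 < p.2),
          cc z g p'.1 p'.2 • (Egen p'.1 p'.2 * Egen p'.2 p'.1) *
            (cc z f p.1 p.2 • (Egen p.1 p.2 * Egen p.2 p.1)) from Finset.sum_comm]
    rw [← Finset.sum_sub_distrib]
    refine Finset.sum_congr rfl (fun p hp => ?_)
    have hplt : p.1 < p.2 := (Finset.mem_filter.mp hp).2
    rw [← Finset.sum_sub_distrib]
    rw [← SInner z g hplt, Finset.smul_sum]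
    refine Finset.sum_congr rfl (fun p' hp' => ?_)
    rw [smul_mul_smul_comm, smul_mul_smul_comm,
      mul_comm (cc z g p'.1 p'.2) (cc z f p.1 p.2), ← smul_sub, mul_smul]
  have k1 := key h h'
  have k2 := key h' h
  -- T1 + T2 = 0
  set T1 := ∑ p ∈ Finset.univ.filter (fun p : Fin M × Fin M => p.1 < p.2),
      cc z h p.1 p.2 • ∑ m : Fin M, (cc z h' p.1 m - cc z h' p.2 m) • Xg p.1 p.2 m with hT1
  set T2 := ∑ p ∈ Finset.univ.filter (fun p : Fin M × Fin M => p.1 < p.2),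
      cc z h' p.1 p.2 • ∑ m : Fin M, (cc z h p.1 m - cc z h p.2 m) • Xg p.1 p.2 m with hT2
  have hTsum : T1 + T2 = 0 := by rw [← k1, ← k2]; abel
  -- T1 - T2 = ∑ dd • Xg
  set F : Fin M × Fin M → UniversalEnvelopingAlgebra ℂ (Matrix (Fin M) (Fin M) ℂ) :=
    fun p => ∑ m : Fin M, dd z h h' p.1 p.2 m • Xg p.1 p.2 m with hF
  have hTdiff : T1 - T2
      = ∑ p ∈ Finset.univ.filter (fun p : Fin M × Fin M => p.1 < p.2), F p := by
    rw [hT1, hT2, ← Finset.sum_sub_distrib]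
    refine Finset.sum_congr rfl (fun p hp => ?_)
    rw [Finset.smul_sum, Finset.smul_sum, ← Finset.sum_sub_distrib, hF]
    refine Finset.sum_congr rfl (fun m _ => ?_)
    rw [smul_smul, smul_smul, ← sub_smul]
    rfl
  -- ∑_S F = 0
  have hFswap : ∀ p : Fin M × Fin M, F p.swap = F p := by
    intro p
    rw [hF]
    refine Finset.sum_congr rfl (fun m _ => ?_)
    simp only [Prod.fst_swap, Prod.snd_swap]
    rw [dd_swap, Xg_swap12, neg_smul, smul_neg, neg_neg]
  have hFdiag : ∀ k : Fin M, F (k, k) = 0 := by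
    intro k; rw [hF]; simp [dd_self]
  have hprod : ∑ p : Fin M × Fin M, F p = 0 := by
    rw [Fintype.sum_prod_type]
    have expand : ∀ a b : Fin M, F (a, b) = ∑ c : Fin M, dd z h h' a b c • Xg a b c :=
      fun a b => rfl
    simp only [expand]
    have cycA : ∑ a : Fin M, ∑ b : Fin M, ∑ c : Fin M, dd z h h' b c a • Xg b c a
        = ∑ a : Fin M, ∑ b : Fin M, ∑ c : Fin M, dd z h h' a b c • Xg a b c :=
      sum_cyc (fun a b c => dd z h h' a b c • Xg a b c)
    have cycB : ∑ a : Fin M, ∑ b : Fin M, ∑ c : Fin M, dd z h h' c a b • Xg c a b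
        = ∑ a : Fin M, ∑ b : Fin M, ∑ c : Fin M, dd z h h' a b c • Xg a b c :=
      (sum_cyc (fun a b c => dd z h h' b c a • Xg b c a)).trans cycA
    have triple : (∑ a : Fin M, ∑ b : Fin M, ∑ c : Fin M, dd z h h' a b c • Xg a b c)
        + ((∑ a : Fin M, ∑ b : Fin M, ∑ c : Fin M, dd z h h' b c a • Xg b c a)
        + (∑ a : Fin M, ∑ b : Fin M, ∑ c : Fin M, dd z h h' c a b • Xg c a b)) = 0 := by
      rw [← Finset.sum_add_distrib, ← Finset.sum_add_distrib]
      refine Finset.sum_eq_zero (fun a _ => ?_)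
      rw [← Finset.sum_add_distrib, ← Finset.sum_add_distrib]
      refine Finset.sum_eq_zero (fun b _ => ?_)
      rw [← Finset.sum_add_distrib, ← Finset.sum_add_distrib]
      refine Finset.sum_eq_zero (fun c _ => ?_)
      rw [show Xg b c a = Xg a b c from Xg_cyc a b c, show Xg c a b = Xg a b c from
        (Xg_cyc c a b).symm, ← add_smul, ← add_smul,
        show dd z h h' a b c + (dd z h h' b c a + dd z h h' c a b) = 0 from by
          rw [← add_assoc]; exact dd_cyc hz h h' a b c,
        zero_smul]
    rw [cycA, cycB] at triple
    have h3 : (3 : ℂ) • (∑ a : Fin M, ∑ b : Fin M, ∑ c : Fin M, dd z h h' a b c • Xg a b c)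
        = 0 := by
      rw [show (3:ℂ) = 1 + 1 + 1 by norm_num, add_smul, add_smul, one_smul]
      rw [← add_assoc] at triple
      exact triple
    rcases smul_eq_zero.mp h3 with hcon | hgood
    · norm_num at hcon
    · exact hgood
  have hSF : ∑ p ∈ Finset.univ.filter (fun p : Fin M × Fin M => p.1 < p.2), F p = 0 := by
    have := sum_pairs F hFdiag
    simp only [hFswap] at this
    rw [hprod] at this
    have h2 : (2 : ℂ) • ∑ p ∈ Finset.univ.filter (fun p : Fin M × Fin M => p.1 < p.2), F p
        = 0 := by
      rw [show (2:ℂ) = 1 + 1 by norm_num, add_smul, one_smul, ← Finset.sum_add_distrib]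
      exact this
    rcases smul_eq_zero.mp h2 with hcon | hgood
    · norm_num at hcon
    · exact hgood
  -- conclude
  have hT12 : T1 = T2 := sub_eq_zero.mp (hTdiff.trans hSF)
  have hT1zero : T1 = 0 := by
    have h2 : (2 : ℂ) • T1 = 0 := by
      rw [two_smul]
      rw [← hT12] at hTsum
      exact hTsum
    rcases smul_eq_zero.mp h2 with hcon | hgood
    · norm_num at hcon
    · exact hgood
  exact sub_eq_zero.mp (k1.trans hT1zero)
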